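/- For m ≥ 2 and n with base m representation (α_j,...,α_0), b_m(mn) ≡ ∏_{i=0}^{j} (α_i + 1) (mod m). -/

import Mathlib

noncomputable def fsh (f : ℕ →₀ ℕ) : ℕ →₀ ℕ :=
  Finsupp.comapDomain Nat.succ f (Set.injOn_of_injective Nat.succ_injective)

@[simp] lemma fsh_apply (f : ℕ →₀ ℕ) (i : ℕ) : fsh f i = f (i + 1) := rfl

lemma sum_split (m : ℕ) (f : ℕ →₀ ℕ) :
    ∑ i ∈ f.support, f i * m ^ i = f 0 + m * ∑ i ∈ (fsh f).support, fsh f i * m ^ i := by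
  have h1 : ∑ i ∈ f.support, f i * m ^ i
      = f 0 + ∑ i ∈ f.support.erase 0, f i * m ^ i := by
    by_cases h0 : 0 ∈ f.support
    · rw [← Finset.add_sum_erase _ _ h0, pow_zero, mul_one]
    · rw [Finset.erase_eq_of_notMem h0, Finsupp.notMem_support_iff.mp h0, zero_add]
  rw [h1, Finset.mul_sum]
  congr 1
  refine Finset.sum_nbij' (fun i => i - 1) (fun i => i + 1) ?_ ?_ ?_ ?_ ?_
  · intro i hi
    have hmem : i ∈ f.support := Finset.mem_of_mem_erase hi
    have h0 : i ≠ 0 := Finset.ne_of_mem_erase hi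
    simp only [Finsupp.mem_support_iff, fsh_apply]
    rwa [Nat.sub_add_cancel (Nat.one_le_iff_ne_zero.mpr h0), ← Finsupp.mem_support_iff]
  · intro i hi
    simp only [Finsupp.mem_support_iff, fsh_apply] at hi
    exact Finset.mem_erase.mpr ⟨Nat.succ_ne_zero i, Finsupp.mem_support_iff.mpr hi⟩
  · intro i hi
    exact Nat.sub_add_cancel (Nat.one_le_iff_ne_zero.mpr (Finset.ne_of_mem_erase hi))
  · intro i _
    simp
  · intro i hi
    have h0 : i ≠ 0 := Finset.ne_of_mem_erase hi
    rw [fsh_apply, Nat.sub_add_cancel (Nat.one_le_iff_ne_zero.mpr h0)]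
    have : m ^ i = m * m ^ (i - 1) := by
      conv_lhs => rw [← Nat.sub_add_cancel (Nat.one_le_iff_ne_zero.mpr h0)]
      rw [pow_succ]; ring
    rw [this]; ring


lemma pp_finite (m n : ℕ) (hm : 2 ≤ m) :
    Finite {f : ℕ →₀ ℕ // ∑ i ∈ f.support, f i * m ^ i = n} := by
  have key : ∀ f : {f : ℕ →₀ ℕ // ∑ i ∈ f.support, f i * m ^ i = n},
      ∀ i, (f : ℕ →₀ ℕ) i ≤ n ∧ ((f : ℕ →₀ ℕ) i ≠ 0 → i ≤ n) := by
    rintro ⟨f, hf⟩ i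
    by_cases hi : f i = 0
    · simp [hi]
    have hmem : i ∈ f.support := Finsupp.mem_support_iff.mpr hi
    have hle : f i * m ^ i ≤ n := hf ▸ Finset.single_le_sum (f := fun i => f i * m ^ i)
      (fun _ _ => Nat.zero_le _) hmem
    constructor
    · calc f i ≤ f i * m ^ i := Nat.le_mul_of_pos_right _ (Nat.pow_pos (by omega))
        _ ≤ n := hle
    · intro _
      have h1 : i < 2 ^ i := Nat.lt_two_pow_self
      have h2 : (2:ℕ) ^ i ≤ m ^ i := Nat.pow_le_pow_left hm i
      have h3 : m ^ i ≤ f i * m ^ i := Nat.le_mul_of_pos_left _ (by omega)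
      omega
  refine Finite.of_injective (fun f => (fun i : Fin (n+1) =>
    (⟨(f : ℕ →₀ ℕ) i, by have := (key f i).1; omega⟩ : Fin (n+1)))) ?_
  rintro ⟨f, hf⟩ ⟨g, hg⟩ h
  ext i
  by_cases hi : i ≤ n
  · exact congrArg Fin.val (congrFun h ⟨i, by omega⟩)
  · have h1 := (key ⟨f, hf⟩ i).2
    have h2 := (key ⟨g, hg⟩ i).2
    simp only at h1 h2
    by_cases hfi : f i = 0 <;> by_cases hgi : g i = 0 <;> first | (rw [hfi, hgi]) | omega

noncomputable def bm (m n : ℕ) : ℕ :=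
  Nat.card {f : ℕ →₀ ℕ // ∑ i ∈ f.support, f i * m ^ i = n}


lemma fsh_recon (c : ℕ) (h : ℕ →₀ ℕ) :
    fsh (Finsupp.single 0 c + Finsupp.mapDomain Nat.succ h) = h := by
  ext i
  rw [fsh_apply, Finsupp.add_apply, Finsupp.single_apply_eq_zero.mpr (by omega),
    Finsupp.mapDomain_apply Nat.succ_injective, zero_add]

lemma recon_zero (c : ℕ) (h : ℕ →₀ ℕ) :
    (Finsupp.single 0 c + Finsupp.mapDomain Nat.succ h : ℕ →₀ ℕ) 0 = c := by
  rw [Finsupp.add_apply, Finsupp.single_eq_same,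
    Finsupp.mapDomain_notin_range _ _ (by rintro ⟨a, ha⟩; exact Nat.succ_ne_zero a ha), add_zero]

lemma bm_rec (m n : ℕ) (hm : 2 ≤ m) :
    bm m n = ∑ k ∈ Finset.range (n / m + 1), bm m k := by
  have hm0 : 0 < m := by omega
  set N := n / m with hN
  have key : ∀ f : ℕ →₀ ℕ, (∑ i ∈ f.support, f i * m ^ i = n) →
      f 0 % m = n % m ∧ f 0 / m ≤ N ∧
        ∑ i ∈ (fsh f).support, fsh f i * m ^ i = N - f 0 / m := by
    intro f hf
    have hs := (sum_split m f).symm.trans hf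
    have h1 : f 0 % m = n % m := by
      rw [← hs]; exact (Nat.add_mul_mod_self_left _ _ _).symm
    have h2 : N = f 0 / m + ∑ i ∈ (fsh f).support, fsh f i * m ^ i := by
      rw [hN, ← hs, Nat.add_mul_div_left _ _ hm0]
    exact ⟨h1, by omega, by omega⟩
  have e : {f : ℕ →₀ ℕ // ∑ i ∈ f.support, f i * m ^ i = n} ≃
      Σ t : Fin (N + 1), {f : ℕ →₀ ℕ // ∑ i ∈ f.support, f i * m ^ i = N - t} := by
    refine ⟨fun f => ⟨⟨(f : ℕ →₀ ℕ) 0 / m, by have := (key f f.2).2.1; omega⟩,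
        ⟨fsh f, (key f f.2).2.2⟩⟩,
      fun x => ⟨Finsupp.single 0 (n % m + m * x.1) + Finsupp.mapDomain Nat.succ x.2, ?_⟩,
      ?_, ?_⟩
    · obtain ⟨⟨t, ht⟩, h, hh⟩ := x
      rw [sum_split, recon_zero, fsh_recon]
      simp only at hh ⊢
      rw [hh]
      have h1 : t ≤ N := by omega
      have h2 : m * (N - t) + m * t = m * N := by rw [← Nat.mul_add, Nat.sub_add_cancel h1]
      have h5 : n % m + m * N = n := by rw [hN]; exact Nat.mod_add_div n m
      omega
    · rintro ⟨f, hf⟩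
      obtain ⟨h1, h2, h3⟩ := key f hf
      apply Subtype.ext
      simp only
      ext i
      cases i with
      | zero =>
        rw [recon_zero]
        have := Nat.mod_add_div (f 0) m
        omega
      | succ i =>
        have := congrFun (congrArg (DFunLike.coe) (fsh_recon (n % m + m * (f 0 / m)) (fsh f))) i
        rw [fsh_apply] at this
        exact this.trans (fsh_apply f i)
    · rintro ⟨⟨t, ht⟩, h, hh⟩
      refine Sigma.subtype_ext (Fin.ext ?_) ?_
      · simp only
        rw [recon_zero, Nat.add_mul_div_left _ _ hm0, Nat.mod_div_self, zero_add]
      · simp only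
        rw [fsh_recon]
  haveI hfin : ∀ t : Fin (N + 1), Finite {f : ℕ →₀ ℕ // ∑ i ∈ f.support, f i * m ^ i = N - t.val} :=
    fun t => pp_finite m _ hm
  haveI := fun t : Fin (N + 1) => Fintype.ofFinite
    {f : ℕ →₀ ℕ // ∑ i ∈ f.support, f i * m ^ i = N - t.val}
  have hcard : bm m n = ∑ t : Fin (N + 1), bm m (N - t.val) := by
    rw [bm, Nat.card_congr e, Nat.card_eq_fintype_card, Fintype.card_sigma]
    congr 1
    ext t
    rw [bm, Nat.card_eq_fintype_card]
  rw [hcard, Fin.sum_univ_eq_sum_range (fun t => bm m (N - t)) (N + 1)]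
  have := Finset.sum_range_reflect (fun k => bm m k) (N + 1)
  simp only [Nat.add_sub_cancel] at this
  rw [← this]



lemma bm_zero (m : ℕ) (hm : 2 ≤ m) : bm m 0 = 1 := by
  rw [bm, Nat.card_eq_one_iff_unique]
  constructor
  · constructor
    rintro ⟨f, hf⟩ ⟨g, hg⟩
    have hz : ∀ h : ℕ →₀ ℕ, (∑ i ∈ h.support, h i * m ^ i = 0) → h = 0 := by
      intro h hh
      ext i
      by_cases hi : i ∈ h.support
      · have h1 := (Finset.sum_eq_zero_iff.mp hh) i hi
        have hmp : 0 < m ^ i := Nat.pow_pos (by omega)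
        simp only [Finsupp.coe_zero, Pi.zero_apply]
        exact Nat.mul_eq_zero.mp h1 |>.resolve_right (by omega)
      · simp [Finsupp.notMem_support_iff.mp hi]
    simp [Subtype.ext_iff, hz f hf, hz g hg]
  · exact ⟨⟨0, by simp⟩⟩

-- S
noncomputable def Sb (m n : ℕ) : ℕ := ∑ k ∈ Finset.range (n + 1), bm m k

lemma bm_eq_S (m n : ℕ) (hm : 2 ≤ m) : bm m n = Sb m (n / m) := bm_rec m n hm

lemma dvd_block (m q : ℕ) (hm : 2 ≤ m) : m ∣ ∑ k ∈ Finset.range (m * q), bm m k := by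
  induction q with
  | zero => simp
  | succ q ih =>
    rw [Nat.mul_succ, Finset.sum_range_add]
    refine Nat.dvd_add ih ?_
    have : ∀ s ∈ Finset.range m, bm m (m * q + s) = Sb m q := by
      intro s hs
      rw [bm_eq_S m _ hm]
      congr 1
      rw [Nat.mul_add_div (by omega), Nat.div_eq_of_lt (Finset.mem_range.mp hs), add_zero]
    rw [Finset.sum_congr rfl this, Finset.sum_const, Finset.card_range, smul_eq_mul]
    exact Dvd.intro _ rfl
  
lemma S_step (m n : ℕ) (hm : 2 ≤ m) : Sb m n ≡ (n % m + 1) * Sb m (n / m) [MOD m] := by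
  have h0 : n + 1 = m * (n / m) + (n % m + 1) := by
    have := Nat.mod_add_div n m; omega
  rw [Sb, h0, Finset.sum_range_add]
  have h1 : ∀ s ∈ Finset.range (n % m + 1), bm m (m * (n / m) + s) = Sb m (n / m) := by
    intro s hs
    rw [bm_eq_S m _ hm]
    congr 1
    have hs' : s < m := by have := Nat.mod_lt n (show 0 < m by omega); have := Finset.mem_range.mp hs; omega
    rw [Nat.mul_add_div (by omega), Nat.div_eq_of_lt hs', add_zero]
  rw [Finset.sum_congr rfl h1, Finset.sum_const, Finset.card_range, smul_eq_mul]
  have h2 := dvd_block m (n / m) hm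
  calc (∑ k ∈ Finset.range (m * (n / m)), bm m k) + (n % m + 1) * Sb m (n / m)
      ≡ 0 + (n % m + 1) * Sb m (n / m) [MOD m] :=
        Nat.ModEq.add_right _ ((Nat.modEq_zero_iff_dvd).mpr h2)
    _ = (n % m + 1) * Sb m (n / m) := by rw [zero_add]

lemma S_digits (m : ℕ) (hm : 2 ≤ m) : ∀ j (α : ℕ → ℕ) (n : ℕ), (∀ i, i ≤ j → α i < m) →
    n = ∑ i ∈ Finset.range (j + 1), α i * m ^ i →
    Sb m n ≡ ∏ i ∈ Finset.range (j + 1), (α i + 1) [MOD m] := by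
  intro j
  induction j with
  | zero =>
    intro α n hd hn
    simp only [zero_add, Finset.range_one, Finset.sum_singleton, Finset.prod_singleton, pow_zero,
      mul_one] at hn
    simp only [zero_add, Finset.range_one, Finset.prod_singleton]
    subst hn
    have hα : α 0 < m := hd 0 le_rfl
    have h1 : α 0 % m = α 0 := Nat.mod_eq_of_lt hα
    have h2 : α 0 / m = 0 := Nat.div_eq_of_lt hα
    have hstep := S_step m (α 0) hm
    have hS0 : Sb m 0 = 1 := by rw [Sb]; simp [bm_zero m hm]
    rw [h1, h2, hS0, mul_one] at hstep
    exact hstep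
  | succ j ih =>
    intro α n hd hn
    set n' : ℕ := ∑ i ∈ Finset.range (j + 1), α (i + 1) * m ^ i with hn'
    have hsplit : n = m * n' + α 0 := by
      rw [hn, Finset.sum_range_succ', pow_zero, mul_one]
      congr 1
      rw [hn', Finset.mul_sum]
      apply Finset.sum_congr rfl
      intro i _
      rw [pow_succ]
      ring
    have hα0 : α 0 < m := hd 0 (by omega)
    have hmod : n % m = α 0 := by rw [hsplit, Nat.mul_add_mod, Nat.mod_eq_of_lt hα0]
    have hdiv : n / m = n' := by
      rw [hsplit, Nat.mul_add_div (by omega), Nat.div_eq_of_lt hα0, add_zero]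
    have hIH := ih (fun i => α (i + 1)) n' (fun i hi => hd (i + 1) (by omega)) hn'
    have hstep := S_step m n hm
    rw [hmod, hdiv] at hstep
    calc Sb m n ≡ (α 0 + 1) * Sb m n' [MOD m] := hstep
      _ ≡ (α 0 + 1) * ∏ i ∈ Finset.range (j + 1), (α (i + 1) + 1) [MOD m] :=
          Nat.ModEq.mul_left _ hIH
      _ = ∏ i ∈ Finset.range (j + 1 + 1), (α i + 1) := by
          conv_rhs => rw [Finset.prod_range_succ']
          rw [mul_comm]

theorem bm_congruence (m n j : ℕ) (α : ℕ → ℕ) (hm : 2 ≤ m) (hj : 0 < α j) (hd : ∀ i, i ≤ j → α i < m)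
    (hn : n = ∑ i ∈ Finset.range (j + 1), α i * m ^ i) :
    bm m (m * n) ≡ ∏ i ∈ Finset.range (j + 1), (α i + 1) [MOD m] := by
  have h1 : bm m (m * n) = Sb m n := by
    rw [bm_eq_S m _ hm, Nat.mul_div_cancel_left n (show 0 < m by omega)]
  rw [h1]
  exact S_digits m hm j α n hd hn
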